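/- Let c ∈ {0,1}, let g be real with 0 < g < 1/(4(2+c)), and let x*₊ = (1 + √(1 − 4(2+c)g))/(2(2+c)g) and x*₋ = (1 − √(1 − 4(2+c)g))/(2(2+c)g) be the two fixed-point coordinates. The Jacobian matrix J(x) = [[1/(g·x²) − c, −1], [1, 0]] has determinant 1 for every x ≠ 0; moreover the trace τ(x) = 1/(g·x²) − c satisfies τ(x*₊)² < 4 and τ(x*₋)² > 4. Consequently J(x*₊) has a pair of non-real complex-conjugate eigenvalues, each of modulus 1 (the fixed point (x*₊, x*₊) is a center), while J(x*₋) has two distinct real eigenvalues whose product is 1 (the fixed point (x*₋, x*₋) is hyperbolic). -/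

import Mathlib

lemma eig_lemma {K : Type*} [Field K] (t a : K) (h : a*a = t*a - 1) :
    Module.End.HasEigenvalue (Matrix.toLin' !![t, -1; (1:K), 0]) a := by
  apply Module.End.hasEigenvalue_of_hasEigenvector (x := ![a, 1])
  constructor
  · rw [Module.End.mem_eigenspace_iff]
    funext i
    fin_cases i <;>
      simp [Matrix.toLin'_apply, Matrix.mulVec, dotProduct, Fin.sum_univ_two]
    linear_combination -h
  · intro h0
    have := congrFun h0 1
    simp at this

set_option maxHeartbeats 1000000 in

/-- Fixed point classification for the maps `F_c`, `c ∈ {0,1}`: the Jacobian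
`J(x) = [[1/(g·x²) − c, −1], [1, 0]]` has determinant 1; the trace `τ` satisfies
`τ(x*₊)² < 4` and `τ(x*₋)² > 4`; hence `J(x*₊)` has a pair of non-real complex-conjugate
eigenvalues of modulus 1 (a center) and `J(x*₋)` has two distinct real eigenvalues of
product 1 (hyperbolic). -/
theorem stmt_3 (c g : ℝ) (hc : c = 0 ∨ c = 1)
    (hg0 : 0 < g) (hg1 : g < 1/(4*(2+c))) :
    let xp : ℝ := (1 + Real.sqrt (1 - 4*(2+c)*g))/(2*(2+c)*g)
    let xm : ℝ := (1 - Real.sqrt (1 - 4*(2+c)*g))/(2*(2+c)*g)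
    let J : ℝ → Matrix (Fin 2) (Fin 2) ℝ := fun x => !![1/(g*x^2) - c, -1; 1, 0]
    let τ : ℝ → ℝ := fun x => 1/(g*x^2) - c
    (∀ x : ℝ, x ≠ 0 → (J x).det = 1) ∧
    (τ xp)^2 < 4 ∧
    (τ xm)^2 > 4 ∧
    (∃ lam : ℂ, lam.im ≠ 0 ∧ ‖lam‖ = 1 ∧
      Module.End.HasEigenvalue (Matrix.toLin' ((J xp).map Complex.ofReal)) lam ∧
      Module.End.HasEigenvalue (Matrix.toLin' ((J xp).map Complex.ofReal)) (starRingEnd ℂ lam)) ∧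
    (∃ a b : ℝ, a ≠ b ∧ a * b = 1 ∧
      Module.End.HasEigenvalue (Matrix.toLin' (J xm)) a ∧
      Module.End.HasEigenvalue (Matrix.toLin' (J xm)) b) := by
  intro xp xm J τ
  have hc0 : 0 ≤ c := by rcases hc with rfl | rfl <;> norm_num
  have hc1 : c ≤ 1 := by rcases hc with rfl | rfl <;> norm_num
  have hk : (0:ℝ) < 2 + c := by linarith
  have h4 : 0 < 1 - 4*(2+c)*g := by
    rw [lt_div_iff₀ (by positivity)] at hg1
    nlinarith
  have hxp : xp = (1 + Real.sqrt (1 - 4*(2+c)*g))/(2*(2+c)*g) := rfl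
  have hxm : xm = (1 - Real.sqrt (1 - 4*(2+c)*g))/(2*(2+c)*g) := rfl
  have hτdef : ∀ x, τ x = 1/(g*x^2) - c := fun _ => rfl
  set s := Real.sqrt (1 - 4*(2+c)*g) with hsdef
  have hs0 : 0 < s := Real.sqrt_pos.mpr h4
  have hs2 : s^2 = 1 - 4*(2+c)*g := Real.sq_sqrt h4.le
  have hs1 : s < 1 := by nlinarith
  have h1p : (0:ℝ) < 1 + s := by linarith
  have h1m : (0:ℝ) < 1 - s := by linarith
  have hτp : τ xp = (2+c)*(1-s)/(1+s) - c := by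
    rw [hτdef, hxp]
    have : (2*(2+c)*g) ≠ 0 := by positivity
    field_simp
    linear_combination (2+c) * hs2
  have hτm : τ xm = (2+c)*(1+s)/(1-s) - c := by
    rw [hτdef, hxm]
    field_simp
    linear_combination (2+c) * hs2
  have hq0 : 0 < (2+c)*(1-s)/(1+s) := by positivity
  have hq2 : (2+c)*(1-s)/(1+s) < 2 + c := by
    rw [div_lt_iff₀ h1p]; nlinarith [mul_pos hk hs0]
  have hT2 : (τ xp)^2 < 4 := by rw [hτp]; nlinarith
  have hr : 2 + c < (2+c)*(1+s)/(1-s) := by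
    rw [lt_div_iff₀ h1m]; nlinarith [mul_pos hk hs0]
  have hU2 : 2 < τ xm := by rw [hτm]; linarith
  refine ⟨?_, hT2, by nlinarith, ?_, ?_⟩
  · intro x hx
    have hJx : J x = !![1/(g*x^2) - c, -1; 1, 0] := rfl
    rw [hJx, Matrix.det_fin_two_of]; ring
  · -- complex eigenvalues for J xp
    have hmap : (J xp).map Complex.ofReal = !![((τ xp : ℝ):ℂ), -1; 1, 0] := by
      have hJp : J xp = !![τ xp, -1; 1, 0] := rfl
      rw [hJp]
      ext i j
      fin_cases i <;> fin_cases j <;> simp [Matrix.map_apply]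
    obtain ⟨T, hT⟩ : ∃ T, τ xp = T := ⟨_, rfl⟩
    rw [hT] at hT2 hmap
    have h4T : 0 < 4 - T^2 := by linarith
    set e : ℝ := Real.sqrt (4 - T^2) with he
    have he2 : e^2 = 4 - T^2 := Real.sq_sqrt h4T.le
    have he0 : 0 < e := Real.sqrt_pos.mpr h4T
    set lam : ℂ := (T/2 : ℝ) + (e/2 : ℝ) * Complex.I with hlamdef
    have heC : (e:ℂ)^2 = 4 - (T:ℂ)^2 := by exact_mod_cast he2
    have hlam : lam * lam = (T:ℂ) * lam - 1 := by
      rw [hlamdef]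
      push_cast
      linear_combination (-(1/4) : ℂ) * heC + ((e:ℂ)^2/4) * Complex.I_sq
    have hlamc : (starRingEnd ℂ) lam * (starRingEnd ℂ) lam
        = (T:ℂ) * (starRingEnd ℂ) lam - 1 := by
      have h := congrArg (starRingEnd ℂ) hlam
      simpa [map_mul, map_sub, map_one, Complex.conj_ofReal] using h
    refine ⟨lam, ?_, ?_, ?_, ?_⟩
    · rw [hlamdef]; simp; positivity
    · have habs : ‖lam‖ ^ 2 = 1 := by
        rw [Complex.sq_norm, Complex.normSq_apply, hlamdef]
        simp
        linear_combination he2/4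
      nlinarith [norm_nonneg lam, habs]
    · rw [hmap]; exact eig_lemma _ _ hlam
    · rw [hmap]; exact eig_lemma _ _ hlamc
  · -- real eigenvalues for J xm
    have hJm : J xm = !![τ xm, -1; 1, 0] := rfl
    obtain ⟨U, hU⟩ : ∃ U, τ xm = U := ⟨_, rfl⟩
    rw [hU] at hU2 hJm
    have h4U : 0 < U^2 - 4 := by nlinarith
    set d : ℝ := Real.sqrt (U^2 - 4) with hd
    have hd2 : d^2 = U^2 - 4 := Real.sq_sqrt h4U.le
    have hd0 : 0 < d := Real.sqrt_pos.mpr h4U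
    refine ⟨(U+d)/2, (U-d)/2, by intro h; nlinarith, by linear_combination (-(1:ℝ)/4) * hd2, ?_, ?_⟩
    · rw [hJm]; exact eig_lemma U _ (by linear_combination (1/4) * hd2)
    · rw [hJm]; exact eig_lemma U _ (by linear_combination (1/4) * hd2)
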